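/- Let $E \subset \mathbb{R}^3$ be an ellipsoid $\{\xi : \sum_{i=1}^3 (l_i(\xi) - z_i)^2 \le 1\}$ for linearly independent linear forms $l_1, l_2, l_3$ on $\mathbb{R}^3$ and $(z_1,z_2,z_3) \in \mathbb{R}^3$. Then $P = \operatorname{conv}(E \cap \mathbb{Z}^3)$ is a normal lattice polytope. -/

import Mathlib

open Set Pointwise

/-- A point of `ℝ^ι` is a lattice point if all its coordinates are integers. -/
def IsLatticePt {ι : Type} (x : ι → ℝ) : Prop := ∀ i, ∃ n : ℤ, x i = n

/-- A lattice polytope: the convex hull of a nonempty finite set of lattice points. -/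
def IsLatticePolytope {ι : Type} (P : Set (ι → ℝ)) : Prop :=
  ∃ V : Set (ι → ℝ), V.Finite ∧ V.Nonempty ∧ (∀ x ∈ V, IsLatticePt x) ∧ P = convexHull ℝ V

/-- A polytope is normal if for every `c ≥ 1` each lattice point of the dilation `c • P`
is a sum of `c` lattice points of `P`. -/
def IsNormal {ι : Type} (P : Set (ι → ℝ)) : Prop :=
  ∀ c : ℕ, 0 < c → ∀ x : ι → ℝ, x ∈ (c : ℝ) • P → IsLatticePt x →
    ∃ f : Fin c → (ι → ℝ), (∀ i, f i ∈ P ∧ IsLatticePt (f i)) ∧ x = ∑ i, f i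


namespace EllipsoidNormal

lemma latt_add {ι : Type} {x y : ι → ℝ} (hx : IsLatticePt x) (hy : IsLatticePt y) :
    IsLatticePt (x + y) := by
  intro i
  obtain ⟨n, hn⟩ := hx i; obtain ⟨m, hm⟩ := hy i
  exact ⟨n + m, by simp [hn, hm]⟩

lemma latt_sub {ι : Type} {x y : ι → ℝ} (hx : IsLatticePt x) (hy : IsLatticePt y) :
    IsLatticePt (x - y) := by
  intro i
  obtain ⟨n, hn⟩ := hx i; obtain ⟨m, hm⟩ := hy i
  exact ⟨n - m, by simp [hn, hm]⟩

lemma latt_sum {ι κ : Type} (t : Finset κ) (f : κ → ι → ℝ)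
    (h : ∀ k ∈ t, IsLatticePt (f k)) : IsLatticePt (∑ k ∈ t, f k) := by
  classical
  induction t using Finset.induction_on with
  | empty => intro i; exact ⟨0, by simp⟩
  | @insert a s hnm ih =>
    rw [Finset.sum_insert hnm]
    exact latt_add (h a (Finset.mem_insert_self a s))
      (ih fun k hk => h k (Finset.mem_insert_of_mem hk))

variable (l : Fin 3 → ((Fin 3 → ℝ) →ₗ[ℝ] ℝ)) (z : Fin 3 → ℝ)

def qE : (Fin 3 → ℝ) → ℝ := fun ξ => ∑ i, (l i ξ - z i) ^ 2

def q0E : (Fin 3 → ℝ) → ℝ := fun u => ∑ i, (l i u) ^ 2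

lemma q0E_nonneg (u : Fin 3 → ℝ) : 0 ≤ q0E l u :=
  Finset.sum_nonneg fun i _ => sq_nonneg _

lemma qA (v w : Fin 3 → ℝ) :
    qE l z ((2:ℝ) • w - v) + qE l z v = 2 * qE l z w + 2 * q0E l (v - w) := by
  unfold qE q0E
  rw [Finset.mul_sum, Finset.mul_sum, ← Finset.sum_add_distrib, ← Finset.sum_add_distrib]
  refine Finset.sum_congr rfl fun i _ => ?_
  have h1 : l i ((2:ℝ) • w - v) = 2 * l i w - l i v := by
    rw [map_sub, map_smul, smul_eq_mul]
  have h2 : l i (v - w) = l i v - l i w := map_sub _ _ _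
  rw [h1, h2]; ring

lemma key1 {κ : Type} (t : Finset κ) (lam a : κ → ℝ) (zz b : ℝ)
    (h1 : ∑ k ∈ t, lam k = 1) (hb : ∑ k ∈ t, lam k * a k = b) :
    ∑ k ∈ t, lam k * (a k - zz) ^ 2 = (b - zz) ^ 2 + ∑ k ∈ t, lam k * (a k - b) ^ 2 := by
  have hcong : ∀ k ∈ t, lam k * (a k - zz) ^ 2 =
      (lam k * (a k - b) ^ 2 + (2 * (b - zz)) * (lam k * a k)) + (zz ^ 2 - b ^ 2) * lam k := by
    intro k _; ring
  rw [Finset.sum_congr rfl hcong, Finset.sum_add_distrib, Finset.sum_add_distrib,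
    ← Finset.mul_sum, ← Finset.mul_sum, hb, h1]
  ring

lemma qB {κ : Type} (t : Finset κ) (lam : κ → ℝ) (u : κ → Fin 3 → ℝ)
    (h1 : ∑ k ∈ t, lam k = 1) :
    ∑ k ∈ t, lam k * qE l z (u k) =
      qE l z (∑ k ∈ t, lam k • u k) +
        ∑ k ∈ t, lam k * q0E l (u k - ∑ k ∈ t, lam k • u k) := by
  set w : Fin 3 → ℝ := ∑ k ∈ t, lam k • u k with hw
  have hb : ∀ i, ∑ k ∈ t, lam k * l i (u k) = l i w := by
    intro i
    rw [hw, map_sum]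
    exact Finset.sum_congr rfl fun k _ => by rw [map_smul, smul_eq_mul]
  calc ∑ k ∈ t, lam k * qE l z (u k)
      = ∑ k ∈ t, ∑ i, lam k * (l i (u k) - z i) ^ 2 := by
        refine Finset.sum_congr rfl fun k _ => ?_
        rw [qE, Finset.mul_sum]
    _ = ∑ i, ∑ k ∈ t, lam k * (l i (u k) - z i) ^ 2 := Finset.sum_comm
    _ = ∑ i, ((l i w - z i) ^ 2 + ∑ k ∈ t, lam k * (l i (u k) - l i w) ^ 2) := by
        refine Finset.sum_congr rfl fun i _ => ?_
        exact key1 t lam (fun k => l i (u k)) (z i) (l i w) h1 (hb i)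
    _ = qE l z w + ∑ i, ∑ k ∈ t, lam k * (l i (u k) - l i w) ^ 2 := by
        rw [Finset.sum_add_distrib]; rfl
    _ = qE l z w + ∑ k ∈ t, lam k * q0E l (u k - w) := by
        congr 1
        rw [Finset.sum_comm]
        refine Finset.sum_congr rfl fun k _ => ?_
        rw [q0E, Finset.mul_sum]
        exact Finset.sum_congr rfl fun i _ => by rw [map_sub]

/-- The lattice points of the ellipsoid. -/
def SE : Set (Fin 3 → ℝ) := {x | qE l z x ≤ 1 ∧ IsLatticePt x}

lemma combo_mem_P {κ : Type} (t : Finset κ) (lam : κ → ℝ) (u : κ → Fin 3 → ℝ)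
    (h0 : ∀ k ∈ t, 0 ≤ lam k) (h1 : ∑ k ∈ t, lam k = 1) (hu : ∀ k ∈ t, u k ∈ SE l z) :
    (∑ k ∈ t, lam k • u k) ∈ convexHull ℝ (SE l z) := by
  rw [← Finset.centerMass_eq_of_sum_1 t u h1]
  exact Finset.centerMass_mem_convexHull t h0 (by rw [h1]; norm_num) hu

lemma PsubE : convexHull ℝ (SE l z) ⊆ {ξ | qE l z ξ ≤ 1} := by
  intro p hp
  rw [_root_.convexHull_eq] at hp
  obtain ⟨κ, t, w, u, h0, h1, hu, hc⟩ := hp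
  rw [Finset.centerMass_eq_of_sum_1 t u h1] at hc
  have hqB := qB l z t w u h1
  rw [hc] at hqB
  have h2 : ∑ k ∈ t, w k * qE l z (u k) ≤ 1 := by
    calc ∑ k ∈ t, w k * qE l z (u k) ≤ ∑ k ∈ t, w k * 1 :=
          Finset.sum_le_sum fun k hk => mul_le_mul_of_nonneg_left (hu k hk).1 (h0 k hk)
      _ = 1 := by rw [← Finset.sum_mul, h1, one_mul]
  have h3 : 0 ≤ ∑ k ∈ t, w k * q0E l (u k - p) :=
    Finset.sum_nonneg fun k hk => mul_nonneg (h0 k hk) (q0E_nonneg l _)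
  show qE l z p ≤ 1
  linarith

/-- Degree 2 splitting: a lattice point which is twice a point of the hull of `SE`
splits as a sum of two points of `SE`. -/
lemma core2 {κ : Type} (t : Finset κ) (lam : κ → ℝ) (u : κ → Fin 3 → ℝ)
    (h0 : ∀ k ∈ t, 0 ≤ lam k) (h1 : ∑ k ∈ t, lam k = 1) (hu : ∀ k ∈ t, u k ∈ SE l z)
    (x : Fin 3 → ℝ) (hx : IsLatticePt x) (hxw : x = (2:ℝ) • ∑ k ∈ t, lam k • u k) :
    ∃ a b, a ∈ SE l z ∧ b ∈ SE l z ∧ x = a + b := by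
  classical
  set w : Fin 3 → ℝ := ∑ k ∈ t, lam k • u k with hw
  -- key identity : ∑ lam k * q (x - u k) = ∑ lam k * q (u k)
  have hA : ∀ k ∈ t, lam k * qE l z (x - u k) =
      lam k * (2 * qE l z w + 2 * q0E l (u k - w)) - lam k * qE l z (u k) := by
    intro k _
    have := qA l z (u k) w
    rw [← hxw] at this
    linear_combination lam k * this
  have hkey : ∑ k ∈ t, lam k * qE l z (x - u k) = ∑ k ∈ t, lam k * qE l z (u k) := by
    rw [Finset.sum_congr rfl hA, Finset.sum_sub_distrib]
    have hqB := qB l z t lam u h1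
    rw [← hw] at hqB
    have hexp : ∀ k ∈ t, lam k * (2 * qE l z w + 2 * q0E l (u k - w)) =
        (2 * qE l z w) * lam k + 2 * (lam k * q0E l (u k - w)) := fun k _ => by ring
    rw [Finset.sum_congr rfl hexp, Finset.sum_add_distrib, ← Finset.mul_sum, ← Finset.mul_sum, h1]
    linarith
  -- find k with lam k > 0 and q (x - u k) ≤ q (u k)
  have hex : ∃ k ∈ t, 0 < lam k ∧ qE l z (x - u k) ≤ qE l z (u k) := by
    by_contra hcon
    push_neg at hcon
    have hlt : ∑ k ∈ t, lam k * qE l z (u k) < ∑ k ∈ t, lam k * qE l z (x - u k) := by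
      apply Finset.sum_lt_sum
      · intro k hk
        rcases (h0 k hk).lt_or_eq with hpos | hzero
        · exact le_of_lt (mul_lt_mul_of_pos_left (hcon k hk hpos) hpos)
        · rw [← hzero]; simp
      · have htne : ∃ k ∈ t, 0 < lam k := by
          by_contra hc2
          push_neg at hc2
          have : ∑ k ∈ t, lam k = 0 :=
            Finset.sum_eq_zero fun k hk => le_antisymm (hc2 k hk) (h0 k hk)
          rw [h1] at this; norm_num at this
        obtain ⟨k, hk, hkpos⟩ := htne
        exact ⟨k, hk, mul_lt_mul_of_pos_left (hcon k hk hkpos) hkpos⟩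
    rw [hkey] at hlt
    exact lt_irrefl _ hlt
  obtain ⟨k, hk, _, hkq⟩ := hex
  refine ⟨u k, x - u k, hu k hk, ⟨le_trans hkq (hu k hk).1, latt_sub hx (hu k hk).2⟩, by abel⟩

/-- The 4×4 matrix whose rows are the points of `v` with a `1` appended. -/
def rowM (v : Fin 4 → Fin 3 → ℝ) : Matrix (Fin 4) (Fin 4) ℝ :=
  Matrix.of fun j i => (Fin.snoc (v j) (1:ℝ) : Fin 4 → ℝ) i

lemma snoc_combo (v : Fin 4 → Fin 3 → ℝ) (β : Fin 4 → ℝ) (hβ : ∑ k, β k = 1) :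
    (Fin.snoc (∑ k, β k • v k) (1:ℝ) : Fin 4 → ℝ)
      = ∑ k, β k • (Fin.snoc (v k) (1:ℝ) : Fin 4 → ℝ) := by
  funext i
  induction i using Fin.lastCases with
  | last =>
    simp only [Fin.snoc_last, Finset.sum_apply, Pi.smul_apply, smul_eq_mul, mul_one]
    exact hβ.symm
  | cast i =>
    simp only [Fin.snoc_castSucc, Finset.sum_apply, Pi.smul_apply, smul_eq_mul]

lemma det_rowM_int (v : Fin 4 → Fin 3 → ℝ) (hv : ∀ j, IsLatticePt (v j)) :
    ∃ m : ℤ, (rowM v).det = (m : ℝ) := by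
  classical
  choose nf hnf using hv
  let N : Matrix (Fin 4) (Fin 4) ℤ :=
    Matrix.of fun j i => (Fin.snoc (fun i' => nf j i') (1:ℤ) : Fin 4 → ℤ) i
  have hMN : rowM v = N.map (Int.cast : ℤ → ℝ) := by
    ext j i
    induction i using Fin.lastCases with
    | last => simp only [rowM, N, Matrix.map_apply, Matrix.of_apply, Fin.snoc_last]; simp
    | cast i => simp [rowM, N, Matrix.map_apply, Fin.snoc_castSucc, hnf]
  refine ⟨N.det, ?_⟩
  rw [hMN]
  have := (RingHom.map_det (Int.castRingHom ℝ) N).symm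
  simpa using this

lemma fin4_third {lam : Fin 4 → ℝ} (h1 : ∑ j, lam j = 1) (hlt : ∀ j, lam j < 1/3)
    (j : Fin 4) : 0 < lam j := by
  have hcard : (Finset.univ.erase j).card = 3 := by
    rw [Finset.card_erase_of_mem (Finset.mem_univ j)]
    simp
  have hne : (Finset.univ.erase j).Nonempty := by
    rw [← Finset.card_pos, hcard]; norm_num
  have hlt3 : ∑ k ∈ Finset.univ.erase j, lam k < ∑ _k ∈ Finset.univ.erase j, (1:ℝ)/3 :=
    Finset.sum_lt_sum_of_nonempty hne (fun k _ => hlt k)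
  rw [Finset.sum_const, hcard] at hlt3
  have h3 : ((3:ℕ) • ((1:ℝ)/3)) = 1 := by norm_num
  rw [h3] at hlt3
  have hsplit : lam j + ∑ k ∈ Finset.univ.erase j, lam k = 1 := by
    rw [Finset.add_sum_erase _ _ (Finset.mem_univ j)]
    exact h1
  linarith

/-- The good case: some barycentric coordinate is at least 1/3. -/
lemma good3 (v : Fin 4 → Fin 3 → ℝ) (lam : Fin 4 → ℝ)
    (hv : ∀ j, v j ∈ SE l z) (h0 : ∀ j, 0 ≤ lam j) (h1 : ∑ j, lam j = 1)
    (j : Fin 4) (hj : (1:ℝ)/3 ≤ lam j)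
    (x : Fin 3 → ℝ) (hx : IsLatticePt x) (hxw : x = (3:ℝ) • ∑ k, lam k • v k) :
    ∃ a b c, a ∈ SE l z ∧ b ∈ SE l z ∧ c ∈ SE l z ∧ x = a + b + c := by
  classical
  set mu : Fin 4 → ℝ := fun k => (3 * lam k - if k = j then 1 else 0) / 2 with hmu
  have hmu0 : ∀ k ∈ Finset.univ, 0 ≤ mu k := by
    intro k _
    rw [hmu]
    by_cases hkj : k = j
    · subst hkj; simp only [eq_self_iff_true, if_true]; linarith
    · simp only [if_neg hkj]; have := h0 k; linarith
  have hite : ∑ k, (if k = j then (1:ℝ) else 0) = 1 := by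
    rw [Finset.sum_ite_eq' Finset.univ j (fun _ => (1:ℝ))]
    simp
  have hmu1 : ∑ k, mu k = 1 := by
    rw [hmu]
    have : ∀ k ∈ Finset.univ, (3 * lam k - if k = j then (1:ℝ) else 0) / 2
        = (3/2) * lam k - (1/2) * (if k = j then (1:ℝ) else 0) := fun k _ => by ring
    rw [Finset.sum_congr rfl this, Finset.sum_sub_distrib, ← Finset.mul_sum, ← Finset.mul_sum,
      h1, hite]
    norm_num
  have hxsub : x - v j = (2:ℝ) • ∑ k, mu k • v k := by
    have step1 : (2:ℝ) • ∑ k, mu k • v k = ∑ k, ((2:ℝ) * mu k) • v k := by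
      rw [Finset.smul_sum]
      exact Finset.sum_congr rfl fun k _ => by rw [smul_smul]
    have step2 : ∀ k ∈ Finset.univ, ((2:ℝ) * mu k) • v k
        = (3 * lam k) • v k - (if k = j then (1:ℝ) else 0) • v k := by
      intro k _
      rw [← sub_smul, hmu]
      congr 1
      field_simp
    have step3 : ∑ k, (if k = j then (1:ℝ) else 0) • v k = v j := by
      have : ∀ k ∈ Finset.univ, (if k = j then (1:ℝ) else 0) • v k
          = if k = j then v k else 0 := by
        intro k _
        by_cases hkj : k = j <;> simp [hkj]
      rw [Finset.sum_congr rfl this, Finset.sum_ite_eq' Finset.univ j v]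
      simp
    have step4 : ∑ k, (3 * lam k) • v k = (3:ℝ) • ∑ k, lam k • v k := by
      rw [Finset.smul_sum]
      exact Finset.sum_congr rfl fun k _ => by rw [smul_smul]
    rw [step1, Finset.sum_congr rfl step2, Finset.sum_sub_distrib, step3, step4, ← hxw]
  have hxvlatt : IsLatticePt (x - v j) := latt_sub hx (hv j).2
  obtain ⟨a, b, ha, hb, hab⟩ :=
    core2 l z Finset.univ mu v hmu0 hmu1 (fun k _ => hv k) (x - v j) hxvlatt hxsub
  refine ⟨v j, a, b, hv j, ha, hb, ?_⟩
  rw [sub_eq_iff_eq_add] at hab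
  rw [hab]; abel

/-- Degree 3 splitting. -/
lemma main3 (n : ℕ) :
    ∀ (v : Fin 4 → Fin 3 → ℝ) (lam : Fin 4 → ℝ),
      (∀ j, v j ∈ SE l z) → (∀ j, 0 ≤ lam j) → (∑ j, lam j = 1) →
      ∀ m : ℤ, (rowM v).det = (m : ℝ) → m.natAbs ≤ n →
      ∀ x : Fin 3 → ℝ, IsLatticePt x → x = (3:ℝ) • ∑ k, lam k • v k →
      ∃ a b c, a ∈ SE l z ∧ b ∈ SE l z ∧ c ∈ SE l z ∧ x = a + b + c := by
  classical
  induction n using Nat.strong_induction_on with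
  | _ n ih =>
  intro v lam hv h0 h1 m hdet hm x hx hxw
  by_cases hgood : ∃ j, (1:ℝ)/3 ≤ lam j
  · obtain ⟨j, hj⟩ := hgood
    exact good3 l z v lam hv h0 h1 j hj x hx hxw
  push_neg at hgood
  have hgood' : ∀ j, lam j < 1/3 := hgood
  have hlampos : ∀ j, 0 < lam j := fin4_third h1 hgood'
  by_cases hm0 : m = 0
  -- degenerate case: affine dependence, reduce to three points
  · have hdet0 : (rowM v).det = 0 := by rw [hdet, hm0]; norm_num
    obtain ⟨γ, hγ0, hγM⟩ := Matrix.exists_vecMul_eq_zero_iff.mpr hdet0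
    have hcol : ∀ i0 : Fin 4, ∑ jj, γ jj * rowM v jj i0 = 0 := by
      intro i0
      have := congrFun hγM i0
      simpa [Matrix.vecMul, dotProduct] using this
    have hsumγ : ∑ jj, γ jj = 0 := by
      have := hcol (Fin.last 3)
      simp only [rowM, Matrix.of_apply, Fin.snoc_last, mul_one] at this; exact this
    have hvec : ∀ i : Fin 3, ∑ jj, γ jj * v jj i = 0 := by
      intro i
      have := hcol (Fin.castSucc i)
      simpa [rowM, Fin.snoc_castSucc] using this
    have hcomb : ∑ jj, γ jj • v jj = 0 := by
      funext i
      rw [Finset.sum_apply]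
      simpa [Pi.smul_apply, smul_eq_mul] using hvec i
    have hjpos : ∃ j₀, 0 < γ j₀ := by
      by_contra hc
      push_neg at hc
      have : ∀ j ∈ Finset.univ, γ j = 0 := by
        intro j _
        have := Finset.sum_eq_zero_iff_of_nonpos (fun k _ => hc k) |>.mp hsumγ
        exact this j (Finset.mem_univ j)
      exact hγ0 (funext fun j => this j (Finset.mem_univ j))
    obtain ⟨j₀, hj₀⟩ := hjpos
    set s : Finset (Fin 4) := Finset.univ.filter (fun j => 0 < γ j) with hs
    have hsne : s.Nonempty := ⟨j₀, by simp [hs, hj₀]⟩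
    obtain ⟨jm, hjm, hmin⟩ := Finset.exists_min_image s (fun j => lam j / γ j) hsne
    have hγjm : 0 < γ jm := (Finset.mem_filter.mp hjm).2
    set t : ℝ := lam jm / γ jm with hts
    have ht0 : 0 ≤ t := div_nonneg (hlampos jm).le hγjm.le
    set lam' : Fin 4 → ℝ := fun j => lam j - t * γ j with hlam'
    have h0' : ∀ j, 0 ≤ lam' j := by
      intro j
      by_cases hgj : 0 < γ j
      · have hmem : j ∈ s := Finset.mem_filter.mpr ⟨Finset.mem_univ j, hgj⟩
        have := hmin j hmem
        have h2 : t * γ j ≤ lam j := (le_div_iff₀ hgj).mp this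
        simp only [hlam']; linarith
      · push_neg at hgj
        have h2 : t * γ j ≤ 0 := mul_nonpos_of_nonneg_of_nonpos ht0 hgj
        have := (hlampos j).le
        simp only [hlam']; linarith
    have h1' : ∑ j, lam' j = 1 := by
      simp only [hlam']
      rw [Finset.sum_sub_distrib, ← Finset.mul_sum, hsumγ, h1]
      ring
    have hw' : ∑ j, lam' j • v j = ∑ j, lam j • v j := by
      have hterm : ∀ j ∈ Finset.univ, lam' j • v j = lam j • v j - t • (γ j • v j) := by
        intro j _
        simp only [hlam']
        rw [sub_smul, smul_smul]
      rw [Finset.sum_congr rfl hterm, Finset.sum_sub_distrib, ← Finset.smul_sum, hcomb,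
        smul_zero, sub_zero]
    have hlamjm' : lam' jm = 0 := by
      simp only [hlam', hts]
      rw [div_mul_cancel₀ _ (ne_of_gt hγjm)]
      ring
    have hex : ∃ j, (1:ℝ)/3 ≤ lam' j := by
      by_contra hc
      push_neg at hc
      have := fin4_third h1' hc jm
      rw [hlamjm'] at this
      exact lt_irrefl _ this
    obtain ⟨j, hj⟩ := hex
    exact good3 l z v lam' hv h0' h1' j hj x hx (by rw [hw']; exact hxw)
  -- nondegenerate case: replace a vertex by the box complement point and recurse
  · set β : Fin 4 → ℝ := fun j => 1 - 3 * lam j with hβ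
    have hβpos : ∀ j, 0 < β j := fun j => by simp only [hβ]; have := hgood' j; linarith
    have hβlt : ∀ j, β j < 1 := fun j => by simp only [hβ]; have := hlampos j; linarith
    have hβ1 : ∑ j, β j = 1 := by
      simp only [hβ]
      rw [Finset.sum_sub_distrib, ← Finset.mul_sum, h1]
      simp
      norm_num
    set y : Fin 3 → ℝ := ∑ j, β j • v j with hy
    have hy_eq : y = (∑ j, v j) - x := by
      have hterm : ∀ j ∈ Finset.univ, β j • v j = v j - (3:ℝ) • (lam j • v j) := by
        intro j _
        simp only [hβ]
        rw [sub_smul, one_smul, smul_smul]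
      rw [hy, Finset.sum_congr rfl hterm, Finset.sum_sub_distrib, ← Finset.smul_sum, ← hxw]
    have hylatt : IsLatticePt y := by
      rw [hy_eq]
      exact latt_sub (latt_sum Finset.univ v (fun j _ => (hv j).2)) hx
    have hyP : y ∈ convexHull ℝ (SE l z) := by
      rw [hy]
      exact combo_mem_P l z Finset.univ β v (fun j _ => (hβpos j).le) hβ1 (fun j _ => hv j)
    have hyS : y ∈ SE l z := ⟨PsubE l z hyP, hylatt⟩
    obtain ⟨jm, _, hmin⟩ := Finset.exists_min_image Finset.univ (fun j => lam j / β j)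
      ⟨0, Finset.mem_univ 0⟩
    set t : ℝ := lam jm / β jm with hts
    have ht0 : 0 ≤ t := div_nonneg (hlampos jm).le (hβpos jm).le
    have htβ : ∀ j, t * β j ≤ lam j := fun j =>
      (le_div_iff₀ (hβpos j)).mp (hmin j (Finset.mem_univ j))
    have hzero : lam jm - t * β jm = 0 := by
      rw [hts, div_mul_cancel₀ _ (ne_of_gt (hβpos jm))]
      ring
    set v' : Fin 4 → Fin 3 → ℝ := Function.update v jm y with hv'def
    set lam' : Fin 4 → ℝ := Function.update (fun j => lam j - t * β j) jm t with hlam'def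
    have hv's : ∀ j, v' j ∈ SE l z := by
      intro j
      by_cases hj : j = jm
      · subst hj; simp only [hv'def, Function.update_self]; exact hyS
      · simp only [hv'def, Function.update_of_ne hj]; exact hv j
    have h0' : ∀ j, 0 ≤ lam' j := by
      intro j
      by_cases hj : j = jm
      · subst hj; simp only [hlam'def, Function.update_self]; exact ht0
      · simp only [hlam'def, Function.update_of_ne hj]; have := htβ j; linarith
    have hsub_all : ∑ j, (lam j - t * β j) = 1 - t := by
      rw [Finset.sum_sub_distrib, ← Finset.mul_sum, hβ1, h1]
      ring
    have h1' : ∑ j, lam' j = 1 := by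
      rw [← Finset.add_sum_erase _ _ (Finset.mem_univ jm)]
      have he : ∑ j ∈ Finset.univ.erase jm, lam' j
          = ∑ j ∈ Finset.univ.erase jm, (lam j - t * β j) := by
        refine Finset.sum_congr rfl fun j hj => ?_
        rw [hlam'def, Function.update_of_ne (Finset.ne_of_mem_erase hj)]
      have he2 : ∑ j ∈ Finset.univ.erase jm, (lam j - t * β j)
          = (∑ j, (lam j - t * β j)) - (lam jm - t * β jm) :=
        Finset.sum_erase_eq_sub (Finset.mem_univ jm)
      rw [he, he2, hsub_all, hzero]
      simp only [hlam'def, Function.update_self]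
      ring
    have hsumv : ∑ j, (lam j - t * β j) • v j = (∑ j, lam j • v j) - t • y := by
      have hterm : ∀ j ∈ Finset.univ, (lam j - t * β j) • v j
          = lam j • v j - t • (β j • v j) := by
        intro j _
        rw [sub_smul, smul_smul]
      rw [Finset.sum_congr rfl hterm, Finset.sum_sub_distrib, ← Finset.smul_sum, ← hy]
    have hw' : ∑ j, lam' j • v' j = ∑ j, lam j • v j := by
      rw [← Finset.add_sum_erase _ _ (Finset.mem_univ jm)]
      have hjm_term : lam' jm • v' jm = t • y := by
        simp only [hlam'def, hv'def, Function.update_self]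
      have he : ∑ j ∈ Finset.univ.erase jm, lam' j • v' j
          = ∑ j ∈ Finset.univ.erase jm, (lam j - t * β j) • v j := by
        refine Finset.sum_congr rfl fun j hj => ?_
        have hne := Finset.ne_of_mem_erase hj
        rw [hlam'def, hv'def, Function.update_of_ne hne, Function.update_of_ne hne]
      have he2 : ∑ j ∈ Finset.univ.erase jm, (lam j - t * β j) • v j
          = (∑ j, (lam j - t * β j) • v j) - (lam jm - t * β jm) • v jm :=
        Finset.sum_erase_eq_sub (Finset.mem_univ jm)
      rw [hjm_term, he, he2, hsumv, hzero, zero_smul, sub_zero]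
      abel
    have hrow : rowM v' = (rowM v).updateRow jm (∑ k, β k • rowM v k) := by
      ext j i
      by_cases hj : j = jm
      · subst hj
        rw [Matrix.updateRow_self]
        have hsnoc := snoc_combo v β hβ1
        have : rowM v' j i = (Fin.snoc y (1:ℝ) : Fin 4 → ℝ) i := by
          simp only [rowM, hv'def, Matrix.of_apply, Function.update_self]
        rw [this, hy, hsnoc]
        rw [Finset.sum_apply]
        rfl
      · rw [Matrix.updateRow_ne hj]
        simp only [rowM, hv'def, Matrix.of_apply, Function.update_of_ne hj]
    obtain ⟨m', hdet'⟩ := det_rowM_int v' (fun j => (hv's j).2)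
    have hdet'' : (m' : ℝ) = β jm * (m : ℝ) := by
      rw [← hdet', hrow, Matrix.det_updateRow_sum, hdet, smul_eq_mul]
    have habs : m'.natAbs < m.natAbs := by
      have h1abs : |(m' : ℝ)| < |(m : ℝ)| := by
        rw [hdet'', abs_mul, abs_of_pos (hβpos jm)]
        have hmabs : 0 < |(m : ℝ)| := by
          rw [abs_pos]
          exact_mod_cast hm0
        nlinarith [hβlt jm]
      have h2abs : |m'| < |m| := by
        have := h1abs
        rw [← Int.cast_abs, ← Int.cast_abs] at this
        exact_mod_cast this
      rw [Int.abs_eq_natAbs, Int.abs_eq_natAbs] at h2abs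
      exact_mod_cast h2abs
    exact ih m'.natAbs (lt_of_lt_of_le habs hm) v' lam' hv's h0' h1' m' hdet' le_rfl
      x hx (by rw [hw']; exact hxw)

lemma sum_pad {α : Type} [AddCommMonoid α] (m : ℕ) (hm : m ≤ 4) (g : ℕ → α)
    (hg : ∀ i, m ≤ i → g i = 0) : ∑ j : Fin 4, g j.1 = ∑ j : Fin m, g j.1 := by
  rw [Fin.sum_univ_eq_sum_range, Fin.sum_univ_eq_sum_range]
  exact (Finset.sum_subset (Finset.range_subset_range.mpr hm)
    (fun x _ hx => hg x (by simpa using hx))).symm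

/-- Carathéodory: a point of the hull is a convex combination of 4 points of `SE`. -/
lemma rep4 (p : Fin 3 → ℝ) (hp : p ∈ convexHull ℝ (SE l z)) :
    ∃ (v : Fin 4 → Fin 3 → ℝ) (lam : Fin 4 → ℝ),
      (∀ j, v j ∈ SE l z) ∧ (∀ j, 0 ≤ lam j) ∧ (∑ j, lam j = 1) ∧ ∑ j, lam j • v j = p := by
  classical
  obtain ⟨ι, hfin, zz, w, hrange, hai, hwpos, hw1, hwz⟩ :=
    eq_pos_convex_span_of_mem_convexHull hp
  letI := hfin
  have hnon : Nonempty ι := by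
    by_contra h
    rw [not_nonempty_iff] at h
    rw [Finset.univ_eq_empty, Finset.sum_empty] at hw1
    norm_num at hw1
  have hcard : Fintype.card ι ≤ 4 := by
    have h1 := hai.card_le_finrank_succ
    have h2 : Module.finrank ℝ (vectorSpan ℝ (Set.range zz)) ≤ 3 := by
      have h3 := Submodule.finrank_le (vectorSpan ℝ (Set.range zz))
      have h4 : Module.finrank ℝ (Fin 3 → ℝ) = 3 := by
        simp [Module.finrank_fintype_fun_eq_card]
      omega
    omega
  set m := Fintype.card ι with hmdef
  have h0m : 0 < m := Fintype.card_pos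
  set e := Fintype.equivFin ι with hedef
  set wn : ℕ → ℝ := fun i => if h : i < m then w (e.symm ⟨i, h⟩) else 0 with hwn
  set zn : ℕ → Fin 3 → ℝ :=
    fun i => if h : i < m then zz (e.symm ⟨i, h⟩) else zz (e.symm ⟨0, h0m⟩) with hzn
  have hwn_eq : ∀ j : Fin m, wn j.1 = w (e.symm j) := fun j => dif_pos j.2
  have hzn_eq : ∀ j : Fin m, zn j.1 = zz (e.symm j) := fun j => dif_pos j.2
  refine ⟨fun j => zn j.1, fun j => wn j.1, ?_, ?_, ?_, ?_⟩
  · intro j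
    simp only [hzn]
    split_ifs with h <;> exact hrange (Set.mem_range_self _)
  · intro j
    simp only [hwn]
    split_ifs with h
    · exact (hwpos _).le
    · exact le_rfl
  · rw [sum_pad m hcard wn (fun i hi => dif_neg (not_lt.mpr hi))]
    rw [Finset.sum_congr rfl (fun j _ => hwn_eq j), Equiv.sum_comp e.symm w]
    exact hw1
  · rw [sum_pad m hcard (fun i => wn i • zn i)
      (fun i hi => by
        show wn i • zn i = 0
        rw [show wn i = 0 from dif_neg (not_lt.mpr hi), zero_smul])]
    rw [Finset.sum_congr rfl (fun (j : Fin m) _ => by rw [hwn_eq j, hzn_eq j])]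
    rw [Equiv.sum_comp e.symm (fun a => w a • zz a)]
    exact hwz

/-- The main decomposition lemma. -/
lemma decomp : ∀ k : ℕ, ∀ x : Fin 3 → ℝ, IsLatticePt x →
    x ∈ (((k + 1 : ℕ)) : ℝ) • convexHull ℝ (SE l z) →
    ∃ f : Fin (k + 1) → Fin 3 → ℝ,
      (∀ i, f i ∈ convexHull ℝ (SE l z) ∧ IsLatticePt (f i)) ∧ x = ∑ i, f i := by
  intro k
  induction k using Nat.strong_induction_on with
  | _ k ih =>
  intro x hx hmem
  obtain ⟨p, hp, hxp⟩ := Set.mem_smul_set.mp hmem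
  rcases k with _ | _ | _ | s
  -- c = 1
  · have hx1 : x = p := by rw [← hxp]; norm_num
    refine ⟨fun _ => x, fun i => ⟨hx1 ▸ hp, hx⟩, by simp⟩
  -- c = 2
  · rw [_root_.convexHull_eq] at hp
    obtain ⟨κ, tt, ww, uu, hw0, hw1, huu, hc⟩ := hp
    rw [Finset.centerMass_eq_of_sum_1 tt uu hw1] at hc
    have hx2 : x = (2:ℝ) • ∑ i ∈ tt, ww i • uu i := by
      rw [hc, ← hxp]; norm_num
    obtain ⟨a, b, ha, hb, hab⟩ := core2 l z tt ww uu hw0 hw1 huu x hx hx2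
    refine ⟨![a, b], ?_, ?_⟩
    · intro i
      fin_cases i
      · exact ⟨subset_convexHull ℝ _ ha, ha.2⟩
      · exact ⟨subset_convexHull ℝ _ hb, hb.2⟩
    · rw [Fin.sum_univ_two]
      simpa using hab
  -- c = 3
  · obtain ⟨v, lam, hv, h0, h1, hw⟩ := rep4 l z p hp
    obtain ⟨m, hdet⟩ := det_rowM_int v (fun j => (hv j).2)
    have hx3 : x = (3:ℝ) • ∑ j, lam j • v j := by
      rw [hw, ← hxp]; norm_num
    obtain ⟨a, b, c, ha, hb, hc, habc⟩ :=
      main3 l z m.natAbs v lam hv h0 h1 m hdet le_rfl x hx hx3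
    refine ⟨![a, b, c], ?_, ?_⟩
    · intro i
      fin_cases i
      · exact ⟨subset_convexHull ℝ _ ha, ha.2⟩
      · exact ⟨subset_convexHull ℝ _ hb, hb.2⟩
      · exact ⟨subset_convexHull ℝ _ hc, hc.2⟩
    · rw [Fin.sum_univ_three]
      simpa using habc
  -- c ≥ 4
  · obtain ⟨v, lam, hv, h0, h1, hw⟩ := rep4 l z p hp
    set c : ℝ := ((s : ℝ) + 4) with hcdef
    set d : ℝ := ((s : ℝ) + 3) with hddef
    have hs0 : (0:ℝ) ≤ (s:ℝ) := Nat.cast_nonneg s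
    have hd0 : 0 < d := by rw [hddef]; linarith
    have hxc : x = c • p := by
      rw [← hxp, hcdef]
      congr 1
      push_cast
      ring
    have hj : ∃ j, (1:ℝ)/4 ≤ lam j := by
      by_contra hcon
      push_neg at hcon
      have h4 : lam 0 + lam 1 + lam 2 + lam 3 = 1 := by
        rw [← Fin.sum_univ_four lam]; exact h1
      linarith [hcon 0, hcon 1, hcon 2, hcon 3]
    obtain ⟨j, hj⟩ := hj
    set mu : Fin 4 → ℝ := fun k' => (c * lam k' - if k' = j then 1 else 0) / d with hmu
    have hmu0 : ∀ k' ∈ Finset.univ, 0 ≤ mu k' := by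
      intro k' _
      rw [hmu]
      apply div_nonneg _ hd0.le
      by_cases hkj : k' = j
      · subst hkj
        simp only [eq_self_iff_true, if_true]
        nlinarith
      · simp only [if_neg hkj]
        have := h0 k'
        nlinarith
    have hite : ∑ k', (if k' = j then (1:ℝ) else 0) = 1 := by
      rw [Finset.sum_ite_eq' Finset.univ j (fun _ => (1:ℝ))]
      simp
    have hmu1 : ∑ k', mu k' = 1 := by
      rw [hmu]
      have hterm : ∀ k' ∈ Finset.univ, (c * lam k' - if k' = j then (1:ℝ) else 0) / d
          = (c / d) * lam k' - (1 / d) * (if k' = j then (1:ℝ) else 0) := fun k' _ => by ring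
      rw [Finset.sum_congr rfl hterm, Finset.sum_sub_distrib, ← Finset.mul_sum,
        ← Finset.mul_sum, h1, hite]
      field_simp
      rw [hcdef, hddef]
      ring
    have hp' : (∑ k', mu k' • v k') ∈ convexHull ℝ (SE l z) :=
      combo_mem_P l z Finset.univ mu v hmu0 hmu1 (fun k' _ => hv k')
    have hxsub : x - v j = d • ∑ k', mu k' • v k' := by
      have step1 : d • ∑ k', mu k' • v k' = ∑ k', (d * mu k') • v k' := by
        rw [Finset.smul_sum]
        exact Finset.sum_congr rfl fun k' _ => by rw [smul_smul]
      have step2 : ∀ k' ∈ Finset.univ, (d * mu k') • v k'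
          = (c * lam k') • v k' - (if k' = j then (1:ℝ) else 0) • v k' := by
        intro k' _
        rw [← sub_smul, hmu]
        congr 1
        field_simp
      have step3 : ∑ k', (if k' = j then (1:ℝ) else 0) • v k' = v j := by
        have : ∀ k' ∈ Finset.univ, (if k' = j then (1:ℝ) else 0) • v k'
            = if k' = j then v k' else 0 := by
          intro k' _
          by_cases hkj : k' = j <;> simp [hkj]
        rw [Finset.sum_congr rfl this, Finset.sum_ite_eq' Finset.univ j v]
        simp
      have step4 : ∑ k', (c * lam k') • v k' = c • ∑ k', lam k' • v k' := by
        rw [Finset.smul_sum]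
        exact Finset.sum_congr rfl fun k' _ => by rw [smul_smul]
      rw [step1, Finset.sum_congr rfl step2, Finset.sum_sub_distrib, step3, step4, hw, ← hxc]
    have hlat' : IsLatticePt (x - v j) := latt_sub hx (hv j).2
    have hmem' : x - v j ∈ (((s + 2 + 1 : ℕ)) : ℝ) • convexHull ℝ (SE l z) := by
      refine Set.mem_smul_set.mpr ⟨∑ k', mu k' • v k', hp', ?_⟩
      have : (((s + 2 + 1 : ℕ)) : ℝ) = d := by rw [hddef]; push_cast; ring
      rw [this]
      exact hxsub.symm
    obtain ⟨f', hf', hsum'⟩ := ih (s + 2) (by omega) (x - v j) hlat' hmem'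
    refine ⟨Fin.cons (v j) f', ?_, ?_⟩
    · intro i
      refine Fin.cases ?_ ?_ i
      · exact ⟨subset_convexHull ℝ _ (hv j), (hv j).2⟩
      · intro i'
        exact hf' i'
    · rw [Fin.sum_cons, ← hsum']
      abel

end EllipsoidNormal

/-- The convex hull of all lattice points of a three-dimensional ellipsoid is a normal
polytope. -/
theorem stmt_14 (l : Fin 3 → ((Fin 3 → ℝ) →ₗ[ℝ] ℝ))
    (hl : LinearIndependent ℝ l) (z : Fin 3 → ℝ)
    (E : Set (Fin 3 → ℝ)) (hE : E = {ξ | ∑ i, (l i ξ - z i) ^ 2 ≤ 1})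
    (P : Set (Fin 3 → ℝ)) (hP : P = convexHull ℝ {x ∈ E | IsLatticePt x}) :
    IsNormal P := by
  subst hE hP
  have hset : {x ∈ {ξ : Fin 3 → ℝ | ∑ i, (l i ξ - z i) ^ 2 ≤ 1} | IsLatticePt x}
      = EllipsoidNormal.SE l z := rfl
  rw [hset]
  intro c hc x hxmem hxlat
  obtain ⟨k, rfl⟩ : ∃ k, c = k + 1 := ⟨c - 1, (Nat.succ_pred_eq_of_pos hc).symm⟩
  exact EllipsoidNormal.decomp l z k x hxlat hxmem
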